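/- Let Ω ⊂ ℝ^m be open and connected, p > m, and let Y ∈ W^{1,p}_loc(Ω; ℝ^{(n+1)×(n+1)}) and G ∈ W^{1,p}_loc(Ω; Sym(n+1)) satisfy ∂_i Y = C_iᵀ Y + Y C_i and ∂_i G = C_iᵀ G + G C_i a.e. in Ω for matrix fields C_i ∈ L^p_loc. If Y(x⋆) = G(x⋆) at some x⋆ ∈ Ω, then Y = G on all of Ω. -/

import Mathlib

open Matrix MeasureTheory
open scoped ENNReal
open Metric

lemma gronwall_zero {f f' g : ℝ → ℝ}
    (hd : ∀ t ∈ Set.Icc (0:ℝ) 1, HasDerivAt f (f' t) t)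
    (hb : ∀ t ∈ Set.Icc (0:ℝ) 1, |f' t| ≤ g t * f t)
    (hnn : ∀ t ∈ Set.Icc (0:ℝ) 1, 0 ≤ f t)
    (hgnn : ∀ t, 0 ≤ g t)
    (hgint : IntervalIntegrable g volume 0 1)
    (hf0 : f 0 = 0) : f 1 = 0 := by
  by_contra hne
  have h1pos : 0 < f 1 := lt_of_le_of_ne (hnn 1 ⟨zero_le_one, le_refl _⟩) (Ne.symm hne)
  set K : Set ℝ := {t : ℝ | t ∈ Set.Icc (0:ℝ) 1 ∧ f t = 0} with hK
  have hKne : K.Nonempty := ⟨0, ⟨le_refl _, zero_le_one⟩, hf0⟩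
  have hKbdd : BddAbove K := ⟨1, fun t ht => ht.1.2⟩
  have hcont : ContinuousOn f (Set.Icc 0 1) :=
    fun t ht => (hd t ht).continuousAt.continuousWithinAt
  have hKclosed : IsClosed K := by
    have : K = Set.Icc (0:ℝ) 1 ∩ f ⁻¹' {0} := by
      ext t
      simp only [hK, Set.mem_setOf_eq, Set.mem_inter_iff, Set.mem_preimage,
        Set.mem_singleton_iff]
    rw [this]
    exact hcont.preimage_isClosed_of_isClosed isClosed_Icc isClosed_singleton
  set s := sSup K with hs
  have hsK : s ∈ K := hKclosed.csSup_mem hKne hKbdd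
  have hs01 : s ∈ Set.Icc (0:ℝ) 1 := hsK.1
  have hfs : f s = 0 := hsK.2
  have hs1 : s < 1 := lt_of_le_of_ne hs01.2 (fun h => hne (h ▸ hfs))
  have hpos : ∀ t, s < t → t ≤ 1 → 0 < f t := by
    intro t hst ht1
    rcases lt_or_eq_of_le (hnn t ⟨le_trans hs01.1 (le_of_lt hst), ht1⟩) with h | h
    · exact h
    · exact absurd (le_csSup hKbdd ⟨⟨le_trans hs01.1 (le_of_lt hst), ht1⟩, h.symm⟩)
        (not_le_of_gt hst)
  set A := ∫ t in (0:ℝ)..1, g t with hA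
  have key : ∀ t, s < t → t ≤ 1 → Real.log (f 1) ≤ Real.log (f t) + A := by
    intro t hst ht1
    have ht0 : 0 ≤ t := le_trans hs01.1 (le_of_lt hst)
    have hsub : Set.uIcc t 1 = Set.Icc t 1 := Set.uIcc_of_le ht1
    have hmemIcc : ∀ x ∈ Set.Icc t 1, x ∈ Set.Icc (0:ℝ) 1 :=
      fun x hx => ⟨le_trans ht0 hx.1, hx.2⟩
    have hposIcc : ∀ x ∈ Set.Icc t 1, 0 < f x :=
      fun x hx => hpos x (lt_of_lt_of_le hst hx.1) hx.2
    have hder : ∀ x ∈ Set.uIcc t 1,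
        HasDerivAt (fun u => Real.log (f u)) (f' x / f x) x := by
      intro x hx
      rw [hsub] at hx
      exact (hd x (hmemIcc x hx)).log (ne_of_gt (hposIcc x hx))
    -- integrability of f'/f on [t,1]
    have hsub2 : Set.uIcc t 1 ⊆ Set.uIcc (0:ℝ) 1 := by
      rw [Set.uIcc_of_le ht1, Set.uIcc_of_le zero_le_one]
      exact Set.Icc_subset_Icc ht0 le_rfl
    have hgintt1 : IntervalIntegrable g volume t 1 := hgint.mono_set hsub2
    have hgint' : IntegrableOn g (Set.Ioc t 1) volume := by
      rw [intervalIntegrable_iff_integrableOn_Ioc_of_le ht1] at hgintt1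
      exact hgintt1
    have hfae : AEMeasurable f (volume.restrict (Set.Ioc t 1)) := by
      refine ContinuousOn.aemeasurable (hcont.mono ?_) measurableSet_Ioc
      exact fun x hx => hmemIcc x ⟨le_of_lt hx.1, hx.2⟩
    have hmeas : AEStronglyMeasurable (fun x => f' x / f x)
        (volume.restrict (Set.Ioc t 1)) := by
      have h1 : AEStronglyMeasurable (fun x => deriv f x / f x)
          (volume.restrict (Set.Ioc t 1)) :=
        ((measurable_deriv f).aemeasurable.div hfae).aestronglyMeasurable
      refine h1.congr ?_
      refine ae_restrict_of_forall_mem measurableSet_Ioc ?_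
      intro x hx
      simp only [(hd x (hmemIcc x ⟨le_of_lt hx.1, hx.2⟩)).deriv]
    have hint : IntervalIntegrable (fun x => f' x / f x) volume t 1 := by
      rw [intervalIntegrable_iff_integrableOn_Ioc_of_le ht1]
      refine Integrable.mono' hgint' hmeas ?_
      refine ae_restrict_of_forall_mem measurableSet_Ioc ?_
      intro x hx
      have hfx : 0 < f x := hposIcc x ⟨le_of_lt hx.1, hx.2⟩
      have hb' := hb x (hmemIcc x ⟨le_of_lt hx.1, hx.2⟩)
      rw [Real.norm_eq_abs, abs_div, abs_of_pos hfx, div_le_iff₀ hfx]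
      exact le_trans hb' (le_of_eq rfl)
    have hftc : ∫ x in t..1, f' x / f x = Real.log (f 1) - Real.log (f t) :=
      intervalIntegral.integral_eq_sub_of_hasDerivAt hder hint
    have hmono : ∫ x in t..1, f' x / f x ≤ ∫ x in t..1, g x := by
      refine intervalIntegral.integral_mono_on ht1 hint (by rw [intervalIntegrable_iff_integrableOn_Ioc_of_le ht1]; exact hgint') ?_
      intro x hx
      have hfx : 0 < f x := hposIcc x hx
      rw [div_le_iff₀ hfx]
      exact le_trans (le_abs_self _) (hb x (hmemIcc x hx))
    have hmono2 : ∫ x in t..1, g x ≤ A := by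
      refine intervalIntegral.integral_mono_interval ht0 ht1 le_rfl ?_ hgint
      exact Filter.Eventually.of_forall (fun x => hgnn x)
    have h2 : Real.log (f 1) - Real.log (f t) ≤ A := by
      rw [← hftc]; exact le_trans hmono hmono2
    linarith
  set ε := f 1 * Real.exp (-A) with hε
  have hεpos : 0 < ε := mul_pos h1pos (Real.exp_pos _)
  have hlb : ∀ t, s < t → t ≤ 1 → ε ≤ f t := by
    intro t hst ht1
    have hft : 0 < f t := hpos t hst ht1
    have h := key t hst ht1
    have : Real.log (f 1) - A ≤ Real.log (f t) := by linarith
    calc ε = Real.exp (Real.log (f 1) - A) := by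
            rw [Real.exp_sub, Real.exp_log h1pos, hε, Real.exp_neg, div_eq_mul_inv]
      _ ≤ Real.exp (Real.log (f t)) := Real.exp_le_exp.mpr this
      _ = f t := Real.exp_log hft
  -- continuity of f at s gives a contradiction
  have hcs : ContinuousAt f s := (hd s hs01).continuousAt
  have hev : ∀ᶠ t in nhds s, f t < ε := by
    have : Filter.Tendsto f (nhds s) (nhds 0) := hfs ▸ hcs.tendsto
    exact this.eventually_lt_const hεpos
  have hmem : Set.Ioo s 1 ∈ nhdsWithin s (Set.Ioi s) :=
    Ioo_mem_nhdsGT_of_mem ⟨le_refl s, hs1⟩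
  have hev' : ∀ᶠ t in nhdsWithin s (Set.Ioi s), f t < ε ∧ t ∈ Set.Ioo s 1 :=
    (hev.filter_mono nhdsWithin_le_nhds).and
      (Filter.eventually_of_mem hmem (fun x hx => hx))
  rcases hev'.exists with ⟨t, hlt, hst, ht1⟩
  exact absurd hlt (not_lt_of_ge (hlb t hst (le_of_lt ht1)))
open MeasureTheory Metric
open scoped ENNReal

lemma lintegral_smul_comp_aux {m : ℕ} (F : (Fin m → ℝ) → ℝ≥0∞) (hF : Measurable F)
    {t : ℝ} (ht : t ≠ 0) :
    ∫⁻ x, F (t • x) = ENNReal.ofReal (|t ^ m|⁻¹) * ∫⁻ x, F x := by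
  have h1 : ∫⁻ x, F (t • x) = ∫⁻ x, F x ∂(Measure.map (t • ·) volume) :=
    (lintegral_map hF (measurable_const_smul t)).symm
  rw [h1, Measure.map_addHaar_smul volume ht, lintegral_smul_measure]
  rw [Module.finrank_fin_fun, abs_inv, smul_eq_mul]

lemma lintegral_ball_scale {m : ℕ} (F : (Fin m → ℝ) → ℝ≥0∞) (hF : Measurable F)
    (z : Fin m → ℝ) (r : ℝ) {t : ℝ} (ht : 0 < t) :
    ∫⁻ y in Metric.ball z r, F (z + t • (y - z))
      = ENNReal.ofReal (|t ^ m|⁻¹) * ∫⁻ w in Metric.ball z (t * r), F w := by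
  have hmb : MeasurableSet (Metric.ball z r) := measurableSet_ball
  have hmb2 : MeasurableSet (Metric.ball z (t*r)) := measurableSet_ball
  rw [← lintegral_indicator hmb, ← lintegral_indicator hmb2]
  -- step 1: translate y = u + z
  have step1 : ∫⁻ y, (Metric.ball z r).indicator (fun y => F (z + t • (y - z))) y
      = ∫⁻ u, (Metric.ball (0 : Fin m → ℝ) r).indicator (fun u => F (z + t • u)) u := by
    rw [← lintegral_add_right_eq_self
      (fun y => (Metric.ball z r).indicator (fun y => F (z + t • (y - z))) y) z]
    congr 1
    ext u
    by_cases h : u ∈ Metric.ball (0 : Fin m → ℝ) r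
    · have h' : u + z ∈ Metric.ball z r := by
        simpa [dist_eq_norm] using (by simpa [dist_eq_norm] using h : ‖u‖ < r)
      rw [Set.indicator_of_mem h', Set.indicator_of_mem h]
      simp
    · have h' : u + z ∉ Metric.ball z r := by
        simp only [mem_ball, dist_eq_norm] at h ⊢
        simpa using h
      rw [Set.indicator_of_notMem h', Set.indicator_of_notMem h]
  -- step 2: scaling u = t⁻¹ • v
  have step2 : ∫⁻ u, (Metric.ball (0 : Fin m → ℝ) r).indicator (fun u => F (z + t • u)) u
      = ENNReal.ofReal (|t ^ m|⁻¹) *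
        ∫⁻ v, (Metric.ball (0 : Fin m → ℝ) (t * r)).indicator (fun v => F (z + v)) v := by
    have hφ : Measurable fun v => (Metric.ball (0 : Fin m → ℝ) (t * r)).indicator
        (fun v => F (z + v)) v := by
      exact (hF.comp (measurable_const.add measurable_id)).indicator measurableSet_ball
    have := lintegral_smul_comp_aux _ hφ (ne_of_gt ht)
    rw [← this]
    congr 1
    ext u
    have hmem : t • u ∈ Metric.ball (0 : Fin m → ℝ) (t * r) ↔
        u ∈ Metric.ball (0 : Fin m → ℝ) r := by
      simp only [mem_ball, dist_zero_right, norm_smul, Real.norm_eq_abs,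
        abs_of_pos ht]
      constructor
      · intro h; exact (mul_lt_mul_iff_right₀ ht).mp h
      · intro h; exact (mul_lt_mul_iff_right₀ ht).mpr h
    by_cases h : u ∈ Metric.ball (0 : Fin m → ℝ) r
    · rw [Set.indicator_of_mem (hmem.mpr h), Set.indicator_of_mem h]
    · rw [Set.indicator_of_notMem (fun hc => h (hmem.mp hc)), Set.indicator_of_notMem h]
  -- step 3: translate back v = w - z
  have step3 : ∫⁻ v, (Metric.ball (0 : Fin m → ℝ) (t * r)).indicator (fun v => F (z + v)) v
      = ∫⁻ w, (Metric.ball z (t * r)).indicator F w := by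
    rw [← lintegral_add_right_eq_self
      (fun w => (Metric.ball z (t*r)).indicator F w) z]
    congr 1
    ext v
    by_cases h : v ∈ Metric.ball (0 : Fin m → ℝ) (t * r)
    · have h' : v + z ∈ Metric.ball z (t*r) := by
        simp only [mem_ball, dist_eq_norm] at h ⊢
        simpa using h
      rw [Set.indicator_of_mem h', Set.indicator_of_mem h]
      congr 1
      abel
    · have h' : v + z ∉ Metric.ball z (t*r) := by
        simp only [mem_ball, dist_eq_norm] at h ⊢
        simpa using h
      rw [Set.indicator_of_notMem h', Set.indicator_of_notMem h]
  rw [step1, step2, step3]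



/-- **uniqueness for the Pfaff-type system `∂_i Z = C_iᵀ Z + Z C_i`.**
Let `Ω ⊂ ℝ^m` be open and connected, `p > m`, and let `Y` and the symmetric matrix field
`G` both solve `∂_i Z = C_iᵀ Z + Z C_i` on `Ω`, with coefficients `C_i` of class
`L^p_loc(Ω)` (solutions of class `W^{1,p}_loc`, rendered here by differentiability of
their entries on `Ω`).  If `Y(x⋆) = G(x⋆)` at some `x⋆ ∈ Ω`, then `Y = G` on `Ω`. -/
theorem pfaff_uniqueness (m n : ℕ) (p : ℝ≥0∞) (hp : (m : ℝ≥0∞) < p)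
    (Ω : Set (Fin m → ℝ)) (hΩ : IsOpen Ω) (hconn : IsConnected Ω)
    (Y G : (Fin m → ℝ) → Matrix (Fin (n + 1)) (Fin (n + 1)) ℝ)
    (C : Fin m → (Fin m → ℝ) → Matrix (Fin (n + 1)) (Fin (n + 1)) ℝ)
    (hGsym : ∀ x ∈ Ω, (G x)ᵀ = G x)
    (hC : ∀ i a b, ∀ x ∈ Ω, ∃ r > 0, Metric.ball x r ⊆ Ω ∧
      MeasureTheory.MemLp (fun y => C i y a b) p (volume.restrict (Metric.ball x r)))
    (hYd : ∀ x ∈ Ω, ∀ a b, DifferentiableAt ℝ (fun y => Y y a b) x)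
    (hGd : ∀ x ∈ Ω, ∀ a b, DifferentiableAt ℝ (fun y => G y a b) x)
    (hYeq : ∀ x ∈ Ω, ∀ i, ∀ a b : Fin (n + 1),
      fderiv ℝ (fun y => Y y a b) x (Pi.single i 1)
        = ((C i x)ᵀ * Y x + Y x * C i x) a b)
    (hGeq : ∀ x ∈ Ω, ∀ i, ∀ a b : Fin (n + 1),
      fderiv ℝ (fun y => G y a b) x (Pi.single i 1)
        = ((C i x)ᵀ * G x + G x * C i x) a b)
    (x₀ : Fin m → ℝ) (hx₀ : x₀ ∈ Ω) (hinit : Y x₀ = G x₀) :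
    ∀ x ∈ Ω, Y x = G x := by
  -- trivial case m = 0
  rcases Nat.eq_zero_or_pos m with hm0 | hm
  · subst hm0
    intro x hx
    have : x = x₀ := funext fun i => i.elim0
    rw [this]; exact hinit
  haveI : Nonempty (Fin m) := ⟨⟨0, hm⟩⟩
  haveI : Nontrivial (Fin m → ℝ) :=
    ⟨⟨0, fun _ => 1, fun h => by
      have := congrFun h ⟨0, hm⟩
      norm_num at this⟩⟩
  -- openness of the agreement set (the key local statement)
  have key : ∀ z ∈ Ω, Y z = G z →
      ∃ r > 0, Metric.ball z r ⊆ Ω ∧ ∀ y ∈ Metric.ball z r, Y y = G y := by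
    intro z hz hzY
    -- choose a uniform radius
    have hchoice : ∀ k : Fin m × Fin (n+1) × Fin (n+1), ∃ ρ, 0 < ρ ∧ Metric.ball z ρ ⊆ Ω ∧
        MemLp (fun x => C k.1 x k.2.1 k.2.2) p (volume.restrict (Metric.ball z ρ)) := by
      intro k
      obtain ⟨ρ, hρ, h1, h2⟩ := hC k.1 k.2.1 k.2.2 z hz
      exact ⟨ρ, hρ, h1, h2⟩
    choose rad hradpos hradsub hradmem using hchoice
    obtain ⟨k₀, _, hk₀⟩ := Finset.exists_mem_eq_inf' (Finset.univ_nonempty) rad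
    set r := Finset.univ.inf' Finset.univ_nonempty rad with hrdef
    have hrpos : 0 < r := hk₀ ▸ hradpos k₀
    have hrsub : Metric.ball z r ⊆ Ω := fun w hw => hradsub k₀ (by rw [← hk₀]; exact hw)
    set B := Metric.ball z r with hBdef
    have hBmeas : MeasurableSet B := measurableSet_ball
    have hmemall : ∀ k : Fin m × Fin (n+1) × Fin (n+1),
        MemLp (fun x => C k.1 x k.2.1 k.2.2) p (volume.restrict B) := fun k =>
      (hradmem k).mono_measure (Measure.restrict_mono
        (Metric.ball_subset_ball (Finset.inf'_le rad (Finset.mem_univ k))) le_rfl)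
    -- the scalar coefficient function
    set S : (Fin m → ℝ) → ℝ := fun x => ∑ i, ∑ a, ∑ b, |C i x a b| with hSdef
    have hSnn : ∀ x, 0 ≤ S x := fun x => Finset.sum_nonneg fun i _ =>
      Finset.sum_nonneg fun a _ => Finset.sum_nonneg fun b _ => abs_nonneg _
    have hS : MemLp S p (volume.restrict B) := by
      have h1 : MemLp (fun x => ∑ k : Fin m × Fin (n+1) × Fin (n+1), |C k.1 x k.2.1 k.2.2|)
          p (volume.restrict B) := by
        refine memLp_finset_sum (f := fun (k : Fin m × Fin (n+1) × Fin (n+1)) x =>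
          |C k.1 x k.2.1 k.2.2|) Finset.univ (fun k _ => ?_)
        have hnorm := (hmemall k).norm
        simpa only [Real.norm_eq_abs] using hnorm
      have h2 : (fun x => ∑ k : Fin m × Fin (n+1) × Fin (n+1), |C k.1 x k.2.1 k.2.2|) = S := by
        funext x
        simp only [hSdef, Fintype.sum_prod_type]
      rwa [h2] at h1
    set S₀ := hS.aestronglyMeasurable.mk S with hS₀def
    have hS₀sm : StronglyMeasurable S₀ := hS.aestronglyMeasurable.stronglyMeasurable_mk
    have hSae : S =ᵐ[volume.restrict B] S₀ := hS.aestronglyMeasurable.ae_eq_mk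
    have hS₀meas : Measurable S₀ := hS₀sm.measurable
    set Fe : (Fin m → ℝ) → ℝ≥0∞ := fun x => (‖S₀ x‖₊ : ℝ≥0∞) with hFedef
    have hFemeas : Measurable Fe := hS₀meas.enorm
    -- exponent arithmetic
    have h1p : (1 : ℝ≥0∞) ≤ p := le_trans (by exact_mod_cast Nat.one_le_cast.mpr hm) hp.le
    set βe : ℝ := p.toReal⁻¹ with hβdef
    have hβnn : 0 ≤ βe := inv_nonneg.mpr ENNReal.toReal_nonneg
    have hβ1 : βe ≤ 1 := by
      rcases eq_or_ne p ∞ with hinf | hfin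
      · simp [hβdef, hinf]
      · have h1 : (1:ℝ) ≤ p.toReal := by
          have := ENNReal.toReal_mono hfin h1p
          simpa using this
        exact inv_le_one_of_one_le₀ h1
    have hmβ : (m:ℝ) * βe < 1 := by
      rcases eq_or_ne p ∞ with hinf | hfin
      · simp [hβdef, hinf]
      · have hmp : (m:ℝ) < p.toReal := by
          have h := (ENNReal.toReal_lt_toReal (ENNReal.natCast_ne_top m) hfin).mpr hp
          simpa using h
        have hppos : 0 < p.toReal := lt_of_le_of_lt (Nat.cast_nonneg m) hmp
        rw [hβdef, ← div_eq_mul_inv, div_lt_one hppos]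
        exact hmp
    set N := eLpNorm S₀ p (volume.restrict B) with hNdef
    have hNfin : N ≠ ∞ := by
      rw [hNdef, ← eLpNorm_congr_ae hSae]
      exact hS.2.ne
    set V₁ := volume (Metric.ball (0 : Fin m → ℝ) 1) with hV₁def
    have hV₁fin : V₁ ≠ ∞ := measure_ball_lt_top.ne
    -- Hölder estimate on balls
    have holder : ∀ ρ : ℝ, 0 < ρ → ρ ≤ r →
        (∫⁻ w in Metric.ball z ρ, Fe w) ≤ N * (ENNReal.ofReal (ρ^m) * V₁) ^ (1 - βe) := by
      intro ρ hρ hρr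
      have hball : volume (Metric.ball z ρ) = ENNReal.ofReal (ρ^m) * V₁ := by
        rw [Measure.addHaar_ball volume z hρ.le, Module.finrank_fin_fun]
      calc (∫⁻ w in Metric.ball z ρ, Fe w)
          = eLpNorm S₀ 1 (volume.restrict (Metric.ball z ρ)) :=
            (eLpNorm_one_eq_lintegral_enorm (f := S₀)).symm
        _ ≤ eLpNorm S₀ p (volume.restrict (Metric.ball z ρ)) *
              (volume.restrict (Metric.ball z ρ) Set.univ) ^ (1/(1:ℝ≥0∞).toReal - 1/p.toReal) :=
            eLpNorm_le_eLpNorm_mul_rpow_measure_univ h1p hS₀sm.aestronglyMeasurable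
        _ ≤ N * (ENNReal.ofReal (ρ^m) * V₁) ^ (1 - βe) := by
            rw [Measure.restrict_apply_univ, hball]
            have hexp : 1/(1:ℝ≥0∞).toReal - 1/p.toReal = 1 - βe := by
              rw [ENNReal.toReal_one, hβdef]
              simp [one_div]
            rw [hexp]
            exact mul_le_mul_left (eLpNorm_mono_measure _
              (Measure.restrict_mono (Metric.ball_subset_ball hρr) le_rfl)) _
    -- the inner estimate
    set cc := N * (ENNReal.ofReal (r^m) * V₁) ^ (1 - βe) with hccdef
    have hccfin : cc ≠ ∞ := by
      refine ENNReal.mul_ne_top hNfin ?_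
      exact (ENNReal.rpow_lt_top_of_nonneg (by linarith) (ENNReal.mul_ne_top
        ENNReal.ofReal_ne_top hV₁fin)).ne
    have inner : ∀ t ∈ Set.Ioc (0:ℝ) 1,
        (∫⁻ y in B, Fe (z + t • (y - z))) ≤ cc * ENNReal.ofReal t ^ (-((m:ℝ)*βe)) := by
      intro t ht
      have ht0 : 0 < t := ht.1
      have hτ0 : ENNReal.ofReal t ≠ 0 := by
        simp only [ne_eq, ENNReal.ofReal_eq_zero, not_le]
        exact ht0
      have hτtop : ENNReal.ofReal t ≠ ∞ := ENNReal.ofReal_ne_top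
      have step1 : ENNReal.ofReal (|t^m|⁻¹) = (ENNReal.ofReal t) ^ (-(m:ℝ)) := by
        rw [abs_of_pos (pow_pos ht0 m), ENNReal.ofReal_inv_of_pos (pow_pos ht0 m),
          ENNReal.ofReal_pow ht0.le, ← ENNReal.rpow_natCast, ← ENNReal.rpow_neg]
      have step2 : ENNReal.ofReal ((t*r)^m)
          = (ENNReal.ofReal t) ^ (m:ℝ) * ENNReal.ofReal (r^m) := by
        rw [mul_pow, ENNReal.ofReal_mul (pow_nonneg ht0.le m), ENNReal.ofReal_pow ht0.le,
          ← ENNReal.rpow_natCast]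
      calc (∫⁻ y in B, Fe (z + t • (y - z)))
          = ENNReal.ofReal (|t^m|⁻¹) * ∫⁻ w in Metric.ball z (t*r), Fe w :=
            lintegral_ball_scale Fe hFemeas z r ht0
        _ ≤ ENNReal.ofReal (|t^m|⁻¹) * (N * (ENNReal.ofReal ((t*r)^m) * V₁) ^ (1 - βe)) := by
            exact mul_le_mul_right (holder (t*r) (mul_pos ht0 hrpos)
              (by nlinarith [ht.2, hrpos])) _
        _ = cc * ENNReal.ofReal t ^ (-((m:ℝ)*βe)) := by
            rw [step1, step2, mul_assoc ((ENNReal.ofReal t) ^ (m:ℝ)),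
              ENNReal.mul_rpow_of_nonneg _ _ (by linarith : (0:ℝ) ≤ 1 - βe),
              ← ENNReal.rpow_mul]
            have hc : (ENNReal.ofReal t) ^ (-(m:ℝ)) *
                (N * ((ENNReal.ofReal t) ^ ((m:ℝ)*(1-βe)) *
                  (ENNReal.ofReal (r^m) * V₁) ^ (1 - βe)))
                = (N * (ENNReal.ofReal (r^m) * V₁) ^ (1 - βe)) *
                  ((ENNReal.ofReal t) ^ (-(m:ℝ)) * (ENNReal.ofReal t) ^ ((m:ℝ)*(1-βe))) := by
              ring
            rw [hc, ← ENNReal.rpow_add _ _ hτ0 hτtop, hccdef]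
            congr 1
            ring_nf
        -- done
    -- finiteness of the t-integral
    have tfin : (∫⁻ t in Set.Ioc (0:ℝ) 1, (ENNReal.ofReal t) ^ (-((m:ℝ)*βe))) < ∞ := by
      have hexp : (-1:ℝ) < -((m:ℝ)*βe) := by linarith
      have hIi : IntegrableOn (fun t : ℝ => t ^ (-((m:ℝ)*βe))) (Set.Ioc (0:ℝ) 1) volume := by
        have h := intervalIntegral.intervalIntegrable_rpow' (a := (0:ℝ)) (b := 1) hexp
        rwa [intervalIntegrable_iff_integrableOn_Ioc_of_le zero_le_one] at h
      have heq : ∫⁻ t in Set.Ioc (0:ℝ) 1, (ENNReal.ofReal t) ^ (-((m:ℝ)*βe))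
          = ∫⁻ t in Set.Ioc (0:ℝ) 1, (‖t ^ (-((m:ℝ)*βe))‖₊ : ℝ≥0∞) := by
        refine setLIntegral_congr_fun measurableSet_Ioc ?_
        intro t ht
        beta_reduce
        rw [ENNReal.ofReal_rpow_of_pos ht.1, ← enorm_eq_nnnorm, Real.enorm_eq_ofReal
          (Real.rpow_nonneg ht.1.le _)]
      rw [heq]
      exact hIi.2
    -- Tonelli
    have hφcont : Continuous (fun q : (Fin m → ℝ) × ℝ => z + q.2 • (q.1 - z)) :=
      continuous_const.add (continuous_snd.smul (continuous_fst.sub continuous_const))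
    have hjoint : Measurable (Function.uncurry fun (y : Fin m → ℝ) (t : ℝ) =>
        Fe (z + t • (y - z))) := hFemeas.comp hφcont.measurable
    have hswap : (∫⁻ y in B, ∫⁻ t in Set.Ioc (0:ℝ) 1, Fe (z + t • (y - z)))
        = ∫⁻ t in Set.Ioc (0:ℝ) 1, ∫⁻ y in B, Fe (z + t • (y - z)) :=
      lintegral_lintegral_swap hjoint.aemeasurable
    have hfin : (∫⁻ y in B, ∫⁻ t in Set.Ioc (0:ℝ) 1, Fe (z + t • (y - z))) < ∞ := by
      rw [hswap]
      calc (∫⁻ t in Set.Ioc (0:ℝ) 1, ∫⁻ y in B, Fe (z + t • (y - z)))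
          ≤ ∫⁻ t in Set.Ioc (0:ℝ) 1, cc * (ENNReal.ofReal t) ^ (-((m:ℝ)*βe)) :=
            setLIntegral_mono' measurableSet_Ioc inner
        _ = cc * ∫⁻ t in Set.Ioc (0:ℝ) 1, (ENNReal.ofReal t) ^ (-((m:ℝ)*βe)) :=
            lintegral_const_mul' _ _ hccfin
        _ < ∞ := ENNReal.mul_lt_top hccfin.lt_top tfin
    have hinnermeas : Measurable (fun y : Fin m → ℝ =>
        ∫⁻ t in Set.Ioc (0:ℝ) 1, Fe (z + t • (y - z))) :=
      Measurable.lintegral_prod_right hjoint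
    have hae1 : ∀ᵐ y ∂(volume.restrict B),
        (∫⁻ t in Set.Ioc (0:ℝ) 1, Fe (z + t • (y - z))) ≠ ∞ :=
      (ae_lt_top hinnermeas hfin.ne).mono fun y hy => hy.ne
    -- the null set where S ≠ S₀
    have hnullset : ∃ Nset : Set (Fin m → ℝ), MeasurableSet Nset ∧ volume Nset = 0 ∧
        ∀ x ∈ B, x ∉ Nset → S x = S₀ x := by
      refine ⟨toMeasurable (volume.restrict B) {x | S x ≠ S₀ x} ∩ B,
        (measurableSet_toMeasurable _ _).inter hBmeas, ?_, ?_⟩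
      · have h0 : volume.restrict B (toMeasurable (volume.restrict B) {x | S x ≠ S₀ x}) = 0 := by
          rw [measure_toMeasurable]
          exact ae_iff.mp hSae
        rwa [Measure.restrict_apply (measurableSet_toMeasurable _ _)] at h0
      · intro x hxB hxn
        by_contra hne
        exact hxn ⟨subset_toMeasurable _ _ hne, hxB⟩
    obtain ⟨Nset, hNm, hN0, hNprop⟩ := hnullset
    have hindmeas : Measurable (Nset.indicator (fun _ => (1:ℝ≥0∞))) :=
      measurable_const.indicator hNm
    have hjoint2 : Measurable (Function.uncurry fun (y : Fin m → ℝ) (t : ℝ) =>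
        Nset.indicator (fun _ => (1:ℝ≥0∞)) (z + t • (y - z))) := hindmeas.comp hφcont.measurable
    have hzero : (∫⁻ y in B, ∫⁻ t in Set.Ioc (0:ℝ) 1,
        Nset.indicator (fun _ => (1:ℝ≥0∞)) (z + t • (y - z))) = 0 := by
      rw [lintegral_lintegral_swap hjoint2.aemeasurable]
      have hind : ∀ t ∈ Set.Ioc (0:ℝ) 1, (∫⁻ y in B,
          Nset.indicator (fun _ => (1:ℝ≥0∞)) (z + t • (y - z))) = 0 := by
        intro t ht
        rw [lintegral_ball_scale _ hindmeas z r ht.1]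
        have h2 : (∫⁻ w in Metric.ball z (t*r), Nset.indicator (fun _ => (1:ℝ≥0∞)) w) = 0 := by
          rw [lintegral_indicator_const hNm]
          have : (volume.restrict (Metric.ball z (t*r))) Nset ≤ volume Nset :=
            Measure.restrict_apply_le _ _
          simp only [one_mul]
          exact le_antisymm (le_trans this (le_of_eq hN0)) zero_le
        rw [h2, mul_zero]
      refine le_antisymm ?_ zero_le
      calc (∫⁻ t in Set.Ioc (0:ℝ) 1, ∫⁻ y in B,
            Nset.indicator (fun _ => (1:ℝ≥0∞)) (z + t • (y - z)))
          ≤ ∫⁻ _t in Set.Ioc (0:ℝ) 1, 0 :=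
            setLIntegral_mono' measurableSet_Ioc (fun t ht => le_of_eq (hind t ht))
        _ = 0 := by simp
    have hinnermeas2 : Measurable (fun y : Fin m → ℝ => ∫⁻ t in Set.Ioc (0:ℝ) 1,
        Nset.indicator (fun _ => (1:ℝ≥0∞)) (z + t • (y - z))) :=
      Measurable.lintegral_prod_right hjoint2
    have hae2 : ∀ᵐ y ∂(volume.restrict B), ∀ᵐ t ∂(volume.restrict (Set.Ioc (0:ℝ) 1)),
        z + t • (y - z) ∉ Nset := by
      have h := (lintegral_eq_zero_iff hinnermeas2).mp hzero
      refine h.mono fun y hy => ?_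
      have h2 := (lintegral_eq_zero_iff ((hindmeas.comp
        (by exact (continuous_const.add (continuous_id.smul
          continuous_const)).measurable : Measurable fun t : ℝ => z + t • (y - z))))).mp hy
      refine h2.mono fun t ht => ?_
      intro hmem
      simp only [Function.comp_apply, Set.indicator_of_mem hmem, Pi.zero_apply] at ht
      exact one_ne_zero ht
    -- the main a.e. statement via the Gronwall argument along segments
    have hmain : ∀ᵐ y ∂(volume.restrict B), Y y = G y := by
      filter_upwards [hae1, hae2, ae_restrict_mem hBmeas] with y hy1 hy2 hyB
      set γ : ℝ → (Fin m → ℝ) := fun s => z + s • (y - z) with hγdef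
      have hγB : ∀ t ∈ Set.Icc (0:ℝ) 1, γ t ∈ B := by
        intro t ht
        have hyz : ‖y - z‖ < r := by
          have := Metric.mem_ball.mp hyB
          rwa [dist_eq_norm] at this
        have : dist (γ t) z < r := by
          rw [dist_eq_norm]
          have he : γ t - z = t • (y - z) := by simp [hγdef]
          rw [he, norm_smul, Real.norm_eq_abs, abs_of_nonneg ht.1]
          calc t * ‖y - z‖ ≤ 1 * ‖y - z‖ :=
              mul_le_mul_of_nonneg_right ht.2 (norm_nonneg _)
            _ < r := by simpa using hyz
        exact Metric.mem_ball.mpr this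
      have hγΩ : ∀ t ∈ Set.Icc (0:ℝ) 1, γ t ∈ Ω := fun t ht => hrsub (hγB t ht)
      set u : Fin (n+1) → Fin (n+1) → (Fin m → ℝ) → ℝ :=
        fun a b x => Y x a b - G x a b with hudef
      set f : ℝ → ℝ := fun s => ∑ a, ∑ b, u a b (γ s) * u a b (γ s) with hfdef
      set E : ℝ → Fin (n+1) → Fin (n+1) → ℝ := fun s a b => ∑ i, (y - z) i *
        (((C i (γ s))ᵀ * (Y (γ s) - G (γ s)) + (Y (γ s) - G (γ s)) * C i (γ s)) a b) with hEdef
      set f' : ℝ → ℝ := fun s => ∑ a, ∑ b, 2 * u a b (γ s) * E s a b with hf'def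
      set g : ℝ → ℝ := fun s => (4 * ((n:ℝ)+1) * r) * S (γ s) with hgdef
      have hγd : ∀ t : ℝ, HasDerivAt γ (y - z) t := by
        intro t
        have h1 : HasDerivAt (fun s : ℝ => s • (y - z)) ((1:ℝ) • (y - z)) t :=
          (hasDerivAt_id t).smul_const (y - z)
        rw [one_smul] at h1; exact h1.const_add z
      -- derivative of each entry along the segment
      have hud : ∀ t ∈ Set.Icc (0:ℝ) 1, ∀ a b,
          HasDerivAt (fun s => u a b (γ s)) (E t a b) t := by
        intro t ht a b
        have hxΩ : γ t ∈ Ω := hγΩ t ht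
        have hYab := hYd (γ t) hxΩ a b
        have hGab := hGd (γ t) hxΩ a b
        have hdiff : DifferentiableAt ℝ (fun x => Y x a b - G x a b) (γ t) := hYab.sub hGab
        have hcomp : HasDerivAt (fun s => u a b (γ s))
            (fderiv ℝ (fun x => Y x a b - G x a b) (γ t) (y - z)) t :=
          hdiff.hasFDerivAt.comp_hasDerivAt t (hγd t)
        have hsingle : ∀ i, fderiv ℝ (fun x => Y x a b - G x a b) (γ t) (Pi.single i 1)
            = (((C i (γ t))ᵀ * (Y (γ t) - G (γ t)) + (Y (γ t) - G (γ t)) * C i (γ t)) a b) := by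
          intro i
          rw [fderiv_fun_sub hYab hGab, ContinuousLinearMap.sub_apply,
            hYeq (γ t) hxΩ i a b, hGeq (γ t) hxΩ i a b]
          simp only [Matrix.add_apply, Matrix.mul_apply, Matrix.sub_apply,
            Matrix.transpose_apply, mul_sub, sub_mul, Finset.sum_sub_distrib]
          ring
        have hveq : (y - z) = ∑ i, (y - z) i • (Pi.single i (1:ℝ) : Fin m → ℝ) := by
          funext j
          rw [Finset.sum_apply]
          simp [Pi.single_apply]
        have hfde : fderiv ℝ (fun x => Y x a b - G x a b) (γ t) (y - z) = E t a b := by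
          rw [hveq, map_sum]
          simp only [_root_.map_smul, smul_eq_mul]
          exact Finset.sum_congr rfl fun i _ => by rw [hsingle i]
        rw [← hfde]
        exact hcomp
      have hd : ∀ t ∈ Set.Icc (0:ℝ) 1, HasDerivAt f (f' t) t := by
        intro t ht
        have h1 : HasDerivAt f
            (∑ a, ∑ b, (E t a b * u a b (γ t) + u a b (γ t) * E t a b)) t := by
          apply HasDerivAt.fun_sum
          intro a _
          apply HasDerivAt.fun_sum
          intro b _
          exact (hud t ht a b).mul (hud t ht a b)
        have h2 : (∑ a, ∑ b, (E t a b * u a b (γ t) + u a b (γ t) * E t a b)) = f' t :=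
          Finset.sum_congr rfl fun a _ => Finset.sum_congr rfl fun b _ => by ring
        rwa [h2] at h1
      have hfnn : ∀ t ∈ Set.Icc (0:ℝ) 1, 0 ≤ f t := fun t _ =>
        Finset.sum_nonneg fun a _ => Finset.sum_nonneg fun b _ => mul_self_nonneg _
      -- the pointwise bound
      have hb : ∀ t ∈ Set.Icc (0:ℝ) 1, |f' t| ≤ g t * f t := by
        intro t ht
        have hfnn' : 0 ≤ f t := hfnn t ht
        set q := Real.sqrt (f t) with hqdef
        have hqnn : 0 ≤ q := Real.sqrt_nonneg _
        have hq2 : q * q = f t := Real.mul_self_sqrt hfnn'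
        have hq : ∀ a b, |u a b (γ t)| ≤ q := by
          intro a b
          have h1 : u a b (γ t) * u a b (γ t) ≤ f t := by
            calc u a b (γ t) * u a b (γ t)
                ≤ ∑ b', u a b' (γ t) * u a b' (γ t) :=
                  Finset.single_le_sum (f := fun b' => u a b' (γ t) * u a b' (γ t))
                    (fun b' _ => mul_self_nonneg _) (Finset.mem_univ b)
              _ ≤ f t := Finset.single_le_sum
                  (f := fun a' => ∑ b', u a' b' (γ t) * u a' b' (γ t))
                  (fun a' _ => Finset.sum_nonneg fun b' _ => mul_self_nonneg _)
                  (Finset.mem_univ a)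
          calc |u a b (γ t)| = Real.sqrt (u a b (γ t) * u a b (γ t)) :=
              (Real.sqrt_mul_self_eq_abs _).symm
            _ ≤ q := Real.sqrt_le_sqrt h1
        have hcoord : ∀ i, |(y - z) i| ≤ r := by
          intro i
          have h1 : |(y - z) i| ≤ ‖y - z‖ := by
            simpa using norm_le_pi_norm (y - z) i
          have h2 : ‖y - z‖ < r := by
            have := Metric.mem_ball.mp hyB
            rwa [dist_eq_norm] at this
          linarith
        set W : Fin (n+1) → Fin (n+1) → ℝ := fun a b =>
          ∑ i, (∑ c, |C i (γ t) c a| + ∑ c, |C i (γ t) c b|) with hWdef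
        have hentry : ∀ i a b,
            |(((C i (γ t))ᵀ * (Y (γ t) - G (γ t)) + (Y (γ t) - G (γ t)) * C i (γ t)) a b)|
            ≤ q * (∑ c, |C i (γ t) c a| + ∑ c, |C i (γ t) c b|) := by
          intro i a b
          have e1 : (((C i (γ t))ᵀ * (Y (γ t) - G (γ t)) + (Y (γ t) - G (γ t)) * C i (γ t)) a b)
              = (∑ c, C i (γ t) c a * u c b (γ t)) + (∑ c, u a c (γ t) * C i (γ t) c b) := by
            simp [Matrix.add_apply, Matrix.mul_apply, Matrix.transpose_apply,
              Matrix.sub_apply, hudef]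
          rw [e1]
          calc |(∑ c, C i (γ t) c a * u c b (γ t)) + (∑ c, u a c (γ t) * C i (γ t) c b)|
              ≤ |∑ c, C i (γ t) c a * u c b (γ t)| + |∑ c, u a c (γ t) * C i (γ t) c b| :=
                abs_add_le _ _
            _ ≤ (∑ c, |C i (γ t) c a * u c b (γ t)|) + (∑ c, |u a c (γ t) * C i (γ t) c b|) :=
                add_le_add (Finset.abs_sum_le_sum_abs _ _) (Finset.abs_sum_le_sum_abs _ _)
            _ ≤ (∑ c, |C i (γ t) c a| * q) + (∑ c, q * |C i (γ t) c b|) :=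
                add_le_add
                  (Finset.sum_le_sum fun c _ => by
                    rw [abs_mul]
                    exact mul_le_mul_of_nonneg_left (hq c b) (abs_nonneg _))
                  (Finset.sum_le_sum fun c _ => by
                    rw [abs_mul]
                    exact mul_le_mul_of_nonneg_right (hq a c) (abs_nonneg _))
            _ = q * (∑ c, |C i (γ t) c a| + ∑ c, |C i (γ t) c b|) := by
                rw [← Finset.sum_mul, ← Finset.mul_sum]
                ring
        have hE : ∀ a b, |E t a b| ≤ r * q * W a b := by
          intro a b
          calc |E t a b| ≤ ∑ i, |(y - z) i *
              (((C i (γ t))ᵀ * (Y (γ t) - G (γ t)) + (Y (γ t) - G (γ t)) * C i (γ t)) a b)| :=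
              Finset.abs_sum_le_sum_abs _ _
            _ ≤ ∑ i, r * (q * (∑ c, |C i (γ t) c a| + ∑ c, |C i (γ t) c b|)) :=
              Finset.sum_le_sum fun i _ => by
                rw [abs_mul]
                exact mul_le_mul (hcoord i) (hentry i a b) (abs_nonneg _) hrpos.le
            _ = r * q * W a b := by
                simp only [hWdef, Finset.mul_sum]
                exact Finset.sum_congr rfl fun i _ => by ring
        have hWsum : (∑ a, ∑ b, W a b) = 2 * ((n:ℝ)+1) * S (γ t) := by
          have hT : (∑ e, ∑ i, ∑ c, |C i (γ t) c e|) = S (γ t) := by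
            rw [hSdef, Finset.sum_comm]
            exact Finset.sum_congr rfl fun i _ => Finset.sum_comm
          calc (∑ a, ∑ b, W a b)
              = ∑ a, ∑ b, ((∑ i, ∑ c, |C i (γ t) c a|) + (∑ i, ∑ c, |C i (γ t) c b|)) := by
                refine Finset.sum_congr rfl fun a _ => Finset.sum_congr rfl fun b _ => ?_
                simp only [hWdef, Finset.sum_add_distrib]
            _ = ∑ a, (((n:ℝ)+1) * (∑ i, ∑ c, |C i (γ t) c a|)
                  + (∑ b, ∑ i, ∑ c, |C i (γ t) c b|)) := by
                refine Finset.sum_congr rfl fun a _ => ?_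
                rw [Finset.sum_add_distrib, Finset.sum_const, Finset.card_univ,
                  Fintype.card_fin, nsmul_eq_mul]
                push_cast
                ring
            _ = ((n:ℝ)+1) * (∑ a, ∑ i, ∑ c, |C i (γ t) c a|)
                  + ((n:ℝ)+1) * (∑ b, ∑ i, ∑ c, |C i (γ t) c b|) := by
                rw [Finset.sum_add_distrib, ← Finset.mul_sum, Finset.sum_const,
                  Finset.card_univ, Fintype.card_fin, nsmul_eq_mul]
                push_cast
                ring
            _ = 2 * ((n:ℝ)+1) * S (γ t) := by rw [hT]; ring
        calc |f' t| ≤ ∑ a, |∑ b, 2 * u a b (γ t) * E t a b| := Finset.abs_sum_le_sum_abs _ _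
          _ ≤ ∑ a, ∑ b, |2 * u a b (γ t) * E t a b| :=
              Finset.sum_le_sum fun a _ => Finset.abs_sum_le_sum_abs _ _
          _ ≤ ∑ a, ∑ b, 2 * q * (r * q * W a b) := by
              refine Finset.sum_le_sum fun a _ => Finset.sum_le_sum fun b _ => ?_
              rw [abs_mul, abs_mul, abs_two]
              exact mul_le_mul (mul_le_mul_of_nonneg_left (hq a b) (by norm_num))
                (hE a b) (abs_nonneg _) (mul_nonneg (by norm_num) hqnn)
          _ = 2 * q * (r * q) * (∑ a, ∑ b, W a b) := by
              rw [Finset.mul_sum]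
              refine Finset.sum_congr rfl fun a _ => ?_
              rw [Finset.mul_sum]
              exact Finset.sum_congr rfl fun b _ => by ring
          _ = g t * f t := by
              rw [hWsum]
              have hrw : 2 * q * (r * q) * (2 * ((n:ℝ)+1) * S (γ t))
                  = (q * q) * (4 * ((n:ℝ)+1) * r * S (γ t)) := by ring
              rw [hrw, hq2, hgdef]
              ring
      have hgnn : ∀ t : ℝ, 0 ≤ g t := by
        intro t
        have : (0:ℝ) ≤ 4 * ((n:ℝ)+1) * r := by positivity
        exact mul_nonneg this (hSnn _)
      -- interval integrability of g
      have hγIocB : ∀ t ∈ Set.Ioc (0:ℝ) 1, γ t ∈ B := fun t ht => hγB t ⟨ht.1.le, ht.2⟩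
      have hg_int : IntervalIntegrable g volume 0 1 := by
        rw [intervalIntegrable_iff_integrableOn_Ioc_of_le zero_le_one]
        have hSease : (fun s => S (γ s)) =ᵐ[volume.restrict (Set.Ioc (0:ℝ) 1)]
            (fun s => S₀ (γ s)) := by
          filter_upwards [hy2, ae_restrict_mem measurableSet_Ioc] with s hs1 hs2
          exact hNprop (γ s) (hγIocB s hs2) hs1
        have hγcont : Continuous γ :=
          continuous_const.add (continuous_id.smul continuous_const)
        have hS₀γ : StronglyMeasurable (fun s => S₀ (γ s)) :=
          hS₀sm.comp_measurable hγcont.measurable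
        have hint : IntegrableOn (fun s => S (γ s)) (Set.Ioc (0:ℝ) 1) volume := by
          constructor
          · exact hS₀γ.aestronglyMeasurable.congr hSease.symm
          · show (∫⁻ s in Set.Ioc (0:ℝ) 1, (‖S (γ s)‖₊ : ℝ≥0∞)) < ∞
            have heq : (∫⁻ s in Set.Ioc (0:ℝ) 1, (‖S (γ s)‖₊ : ℝ≥0∞))
                = ∫⁻ s in Set.Ioc (0:ℝ) 1, Fe (γ s) := by
              refine lintegral_congr_ae (hSease.mono fun s hs => ?_)
              rw [hFedef]
              simp only [hs]
            rw [heq]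
            exact lt_top_iff_ne_top.mpr hy1
        exact hint.const_mul _
      have hf0 : f 0 = 0 := by
        have hγ0 : γ 0 = z := by simp [hγdef]
        simp [hfdef, hγ0, hudef, hzY]
      have hf1 : f 1 = 0 := gronwall_zero hd hb hfnn hgnn hg_int hf0
      have hγ1 : γ 1 = y := by simp [hγdef]
      simp only [hfdef] at hf1
      rw [hγ1] at hf1
      have hzero2 : ∀ a b, u a b y * u a b y = 0 := by
        intro a b
        have h1 := (Finset.sum_eq_zero_iff_of_nonneg (fun a' _ =>
          Finset.sum_nonneg fun b' _ => mul_self_nonneg (u a' b' y))).mp hf1 a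
          (Finset.mem_univ a)
        exact (Finset.sum_eq_zero_iff_of_nonneg (fun b' _ =>
          mul_self_nonneg (u a b' y))).mp h1 b (Finset.mem_univ b)
      apply Matrix.ext
      intro a b
      have := mul_self_eq_zero.mp (hzero2 a b)
      rw [hudef] at this
      exact sub_eq_zero.mp this
    -- upgrade from a.e. to everywhere using continuity
    refine ⟨r, hrpos, hrsub, ?_⟩
    intro y hyB
    by_contra hne
    have : ∃ a b, Y y a b ≠ G y a b := by
      by_contra hcon
      push_neg at hcon
      exact hne (Matrix.ext hcon)
    obtain ⟨a, b, hab⟩ := this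
    have hcont : ContinuousAt (fun x => Y x a b - G x a b) y :=
      ((hYd y (hrsub hyB) a b).sub (hGd y (hrsub hyB) a b)).continuousAt
    have hev : ∀ᶠ x in nhds y, Y x a b - G x a b ≠ 0 :=
      hcont.eventually_ne (sub_ne_zero_of_ne hab)
    have hev2 : ∀ᶠ x in nhds y, x ∈ B := (Metric.isOpen_ball).mem_nhds hyB
    rcases Metric.eventually_nhds_iff_ball.mp (hev.and hev2) with ⟨s, hs, hball⟩
    have hsubbad : Metric.ball y s ⊆ {x | ¬ Y x = G x} ∩ B := by
      intro w hw
      refine ⟨fun hYG => (hball w hw).1 (by rw [hYG, sub_self]), (hball w hw).2⟩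
    have hvol0 : volume ({x | ¬ Y x = G x} ∩ B) = 0 := by
      have := ae_iff.mp hmain
      rwa [Measure.restrict_apply' hBmeas] at this
    have hpos := Metric.measure_ball_pos volume y hs
    have : volume (Metric.ball y s) = 0 :=
      le_antisymm (le_trans (measure_mono hsubbad) (le_of_eq hvol0)) zero_le
    rw [this] at hpos
    exact lt_irrefl _ hpos

  -- openness of disagreement set
  have hVopen : ∀ z ∈ Ω, Y z ≠ G z → ∃ s > 0, Metric.ball z s ⊆ Ω ∧
      ∀ y ∈ Metric.ball z s, Y y ≠ G y := by
    intro z hz hne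
    have : ∃ a b, Y z a b ≠ G z a b := by
      by_contra hcon
      push_neg at hcon
      exact hne (Matrix.ext hcon)
    obtain ⟨a, b, hab⟩ := this
    have hcont : ContinuousAt (fun x => Y x a b - G x a b) z :=
      ((hYd z hz a b).sub (hGd z hz a b)).continuousAt
    have hne0 : (fun x => Y x a b - G x a b) z ≠ 0 := sub_ne_zero_of_ne hab
    have hev : ∀ᶠ x in nhds z, Y x a b - G x a b ≠ 0 := hcont.eventually_ne hne0
    have hev2 : ∀ᶠ x in nhds z, x ∈ Ω := hΩ.mem_nhds hz
    rcases Metric.eventually_nhds_iff_ball.mp (hev.and hev2) with ⟨s, hs, hball⟩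
    exact ⟨s, hs, fun y hy => (hball y hy).2, fun y hy h =>
      (hball y hy).1 (by rw [h, sub_self])⟩
  -- clopen argument
  intro x hx
  by_contra hxne
  set U : Set (Fin m → ℝ) :=
    {w | ∃ r > 0, Metric.ball w r ⊆ Ω ∧ ∀ y ∈ Metric.ball w r, Y y = G y} with hU
  set V : Set (Fin m → ℝ) :=
    {w | ∃ s > 0, Metric.ball w s ⊆ Ω ∧ ∀ y ∈ Metric.ball w s, Y y ≠ G y} with hV
  have hUopen : IsOpen U := by
    rw [Metric.isOpen_iff]
    rintro w ⟨r, hr, hsub, hval⟩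
    refine ⟨r, hr, fun w' hw' => ?_⟩
    refine ⟨r - dist w' w, by simpa using hw', fun y hy => hsub ?_, fun y hy => hval y ?_⟩
    · exact Metric.mem_ball.mpr (lt_of_le_of_lt (dist_triangle y w' w)
        (by have := Metric.mem_ball.mp hy; linarith))
    · exact Metric.mem_ball.mpr (lt_of_le_of_lt (dist_triangle y w' w)
        (by have := Metric.mem_ball.mp hy; linarith))
  have hVopen' : IsOpen V := by
    rw [Metric.isOpen_iff]
    rintro w ⟨r, hr, hsub, hval⟩
    refine ⟨r, hr, fun w' hw' => ?_⟩
    refine ⟨r - dist w' w, by simpa using hw', fun y hy => hsub ?_, fun y hy => hval y ?_⟩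
    · exact Metric.mem_ball.mpr (lt_of_le_of_lt (dist_triangle y w' w)
        (by have := Metric.mem_ball.mp hy; linarith))
    · exact Metric.mem_ball.mpr (lt_of_le_of_lt (dist_triangle y w' w)
        (by have := Metric.mem_ball.mp hy; linarith))
  have hcover : Ω ⊆ U ∪ V := by
    intro w hw
    by_cases hYG : Y w = G w
    · exact Or.inl (key w hw hYG)
    · exact Or.inr (hVopen w hw hYG)
  have hUne : (Ω ∩ U).Nonempty := ⟨x₀, hx₀, key x₀ hx₀ hinit⟩
  have hVne : (Ω ∩ V).Nonempty := ⟨x, hx, hVopen x hx hxne⟩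
  obtain ⟨w, hwΩ, hwU, hwV⟩ := hconn.isPreconnected U V hUopen hVopen' hcover hUne hVne
  obtain ⟨r1, hr1, _, hval1⟩ := hwU
  obtain ⟨r2, hr2, _, hval2⟩ := hwV
  exact hval2 w (Metric.mem_ball_self hr2) (hval1 w (Metric.mem_ball_self hr1))
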